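/- Let E be a finite-dimensional real inner product space and let Φ₊ be a finite set of nonzero vectors of E all contained in a common open half-space, i.e. there exists v ∈ E with ⟨α, v⟩ > 0 for every α ∈ Φ₊. Then for every M > 0 there exists δ₀ > 0, depending only on Φ₊, v and M, such that every point x ∈ E satisfying ⟨α, x⟩ > 0 for all α ∈ Φ₊ and ‖ Σ_{α∈Φ₊} coth(⟨α, x⟩) · α ‖ ≤ M also satisfies ⟨α, x⟩ ≥ δ₀ for all α ∈ Φ₊. -/

import Mathlib

open scoped RealInnerProductSpace

/-- The hyperbolic cotangent. -/
noncomputable def coth (s : ℝ) : ℝ := Real.cosh s / Real.sinh s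

lemma sinh_lt_mul_cosh {s : ℝ} (hs : 0 < s) : Real.sinh s < s * Real.cosh s := by
  have h : StrictMonoOn (fun t : ℝ => t * Real.cosh t - Real.sinh t) (Set.Ici 0) := by
    apply strictMonoOn_of_deriv_pos (convex_Ici 0)
    · exact ((continuous_id.mul Real.continuous_cosh).sub Real.continuous_sinh).continuousOn
    · intro t ht
      rw [interior_Ici] at ht
      have hd : HasDerivAt (fun t : ℝ => t * Real.cosh t - Real.sinh t)
          ((1 * Real.cosh t + t * Real.sinh t) - Real.cosh t) t :=
        ((hasDerivAt_id t).mul (Real.hasDerivAt_cosh t)).sub (Real.hasDerivAt_sinh t)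
      rw [hd.deriv]
      have he : (1 * Real.cosh t + t * Real.sinh t) - Real.cosh t = t * Real.sinh t := by ring
      rw [he]
      exact mul_pos ht (Real.sinh_pos_iff.mpr ht)
  have h0 := h (Set.self_mem_Ici) (Set.mem_Ici.mpr hs.le) hs
  simpa using h0

lemma coth_gt_inv {s : ℝ} (hs : 0 < s) : 1 / s < coth s := by
  have hsinh := Real.sinh_pos_iff.mpr hs
  rw [coth, div_lt_div_iff₀ hs hsinh]
  calc 1 * Real.sinh s = Real.sinh s := by ring
    _ < s * Real.cosh s := sinh_lt_mul_cosh hs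
    _ = Real.cosh s * s := by ring

/-- If a finite set `Φ` of nonzero vectors lies in a common open half-space
(determined by `v`), then boundedness of `‖∑ coth⟨α,x⟩ • α‖` forces `x` to stay
at a uniform distance from the walls `⟨α, ·⟩ = 0`. -/
theorem stmt0 {E : Type*} [NormedAddCommGroup E] [InnerProductSpace ℝ E]
    [FiniteDimensional ℝ E]
    (Φ : Finset E) (hΦ : ∀ α ∈ Φ, α ≠ 0)
    (v : E) (hv : ∀ α ∈ Φ, 0 < ⟪α, v⟫) :
    ∀ M : ℝ, 0 < M → ∃ δ₀ : ℝ, 0 < δ₀ ∧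
      ∀ x : E, (∀ α ∈ Φ, 0 < ⟪α, x⟫) →
        ‖∑ α ∈ Φ, coth ⟪α, x⟫ • α‖ ≤ M →
        ∀ α ∈ Φ, δ₀ ≤ ⟪α, x⟫ := by
  intro M hM
  rcases Φ.eq_empty_or_nonempty with hΦe | hne
  · exact ⟨1, one_pos, by simp [hΦe]⟩
  obtain ⟨α₀, hα₀⟩ := hne
  have hvnorm : 0 < ‖v‖ := by
    rcases eq_or_ne v 0 with rfl | hv0
    · simpa using (hv α₀ hα₀)
    · exact norm_pos_iff.mpr hv0
  set c : ℝ := Φ.inf' ⟨α₀, hα₀⟩ (fun α => ⟪α, v⟫) with hc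
  have hcpos : 0 < c := by
    rw [hc]
    exact (Finset.lt_inf'_iff _).mpr fun α hα => hv α hα
  refine ⟨c / (M * ‖v‖), by positivity, ?_⟩
  intro x hx hb α hα
  have hax : 0 < ⟪α, x⟫ := hx α hα
  have hcoth : ∀ β ∈ Φ, 0 < coth ⟪β, x⟫ := by
    intro β hβ
    exact div_pos (Real.cosh_pos _) (Real.sinh_pos_iff.mpr (hx β hβ))
  have hpair : ∑ β ∈ Φ, coth ⟪β, x⟫ * ⟪β, v⟫ ≤ M * ‖v‖ := by
    have h1 : ⟪∑ β ∈ Φ, coth ⟪β, x⟫ • β, v⟫ = ∑ β ∈ Φ, coth ⟪β, x⟫ * ⟪β, v⟫ := by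
      rw [sum_inner]
      exact Finset.sum_congr rfl fun β _ => real_inner_smul_left β v _
    calc ∑ β ∈ Φ, coth ⟪β, x⟫ * ⟪β, v⟫ = ⟪∑ β ∈ Φ, coth ⟪β, x⟫ • β, v⟫ := h1.symm
      _ ≤ ‖∑ β ∈ Φ, coth ⟪β, x⟫ • β‖ * ‖v‖ := real_inner_le_norm _ _
      _ ≤ M * ‖v‖ := mul_le_mul_of_nonneg_right hb (norm_nonneg v)
  have hterm : coth ⟪α, x⟫ * ⟪α, v⟫ ≤ M * ‖v‖ := by
    refine le_trans (Finset.single_le_sum (f := fun β => coth ⟪β, x⟫ * ⟪β, v⟫) ?_ hα) hpair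
    intro β hβ
    exact le_of_lt (mul_pos (hcoth β hβ) (hv β hβ))
  have hinv : (1 / ⟪α, x⟫) * ⟪α, v⟫ ≤ M * ‖v‖ :=
    le_trans (le_of_lt (mul_lt_mul_of_pos_right (coth_gt_inv hax) (hv α hα))) hterm
  have h3 : ⟪α, v⟫ ≤ (M * ‖v‖) * ⟪α, x⟫ := by
    rw [one_div, inv_mul_le_iff₀ hax] at hinv
    linarith [hinv]
  have h4 : ⟪α, v⟫ / (M * ‖v‖) ≤ ⟪α, x⟫ := by
    rw [div_le_iff₀ (by positivity)]
    linarith [h3]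
  have h5 : c ≤ ⟪α, v⟫ := Finset.inf'_le _ hα
  calc c / (M * ‖v‖) ≤ ⟪α, v⟫ / (M * ‖v‖) :=
        div_le_div_of_nonneg_right h5 (by positivity)
    _ ≤ ⟪α, x⟫ := h4
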